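/- For every commutative ring A, every family of weights R : ℤ → A, every integer n and all natural numbers j ≥ 1 and k ≥ 0, the following inversion relation holds: Σ_{i=0}^{j} (−1)^{j−i} · Π_{n−j,n+j−1}(j−i) · (Z_{n−k,n+k−1}(2i−1) − R_{n−k−1}R_{n+k+1}·Z_{n−k−2,n+k+1}(2i−1)) = δ_{j,k}, where δ_{j,k} is 1 if j = k and 0 otherwise. -/

import Mathlib

open Finset

variable {A : Type*} [CommRing A]

/-- End height of a walk starting at a given height, with steps given by a list of
Booleans (`true` = ascending step `+1`, `false` = descending step `-1`). -/
def walkEnd : ℤ → List Bool → ℤ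
  | a, [] => a
  | a, true :: s => walkEnd (a + 1) s
  | a, false :: s => walkEnd (a - 1) s

/-- Weight of a walk: the product of `R h` over all descending steps `h → h - 1`. -/
def walkWeight (R : ℤ → A) : ℤ → List Bool → A
  | _, [] => 1
  | a, true :: s => walkWeight R (a + 1) s
  | a, false :: s => R a * walkWeight R (a - 1) s

/-- Whether every height visited by the walk (including the first and last) is `≥ c`. -/
def walkAbove (c : ℤ) : ℤ → List Bool → Bool
  | a, [] => decide (c ≤ a)
  | a, true :: s => decide (c ≤ a) && walkAbove c (a + 1) s
  | a, false :: s => decide (c ≤ a) && walkAbove c (a - 1) s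

/-- `Zw R a b k`: the generating function of walks of length `k` from height `a` to
height `b`, each walk weighted by `R h` per descending step from height `h`. -/
def Zw (R : ℤ → A) (a b : ℤ) (k : ℕ) : A :=
  ∑ s : Fin k → Bool,
    if walkEnd a (List.ofFn s) = b then walkWeight R a (List.ofFn s) else 0

/-- `Zwp R a b k`: the same generating function, restricted to walks staying at
heights `≥ a` ("positive walks"). -/
def Zwp (R : ℤ → A) (a b : ℤ) (k : ℕ) : A :=
  ∑ s : Fin k → Bool,
    if walkEnd a (List.ofFn s) = b ∧ walkAbove a a (List.ofFn s) = true then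
      walkWeight R a (List.ofFn s)
    else 0

/-- `Pdim R a b k`: hard-dimer partition function on the segment `[a,b]`: the sum over
`k`-element subsets `S` of `{a+1, …, b}` with no two consecutive elements of
`∏ i in S, R i` (a dimer on `[i-1,i]` carries weight `R i`). -/
noncomputable def Pdim (R : ℤ → A) (a b : ℤ) (k : ℕ) : A :=
  ∑ S ∈ Finset.powersetCard k (Finset.Icc (a + 1) b),
    if ∀ i ∈ S, i + 1 ∉ S then ∏ i ∈ S, R i else 0

/-- `Vp R g m a b = Σ_{k=1}^{m} g_k • Zw R a b (2k-1)`: grand-canonical generating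
function for walks of odd length from `a` to `b`. -/
def Vp (R : ℤ → A) (g : ℕ → A) (m : ℕ) (a b : ℤ) : A :=
  ∑ k ∈ Finset.Icc 1 m, g k * Zw R a b (2 * k - 1)

/-- The conserved quantities `Γ_{2i}(n)`; `Gam R g m i n` stands for `Γ_{2i}(n)`. -/
def Gam (R : ℤ → A) (g : ℕ → A) (m : ℕ) (i : ℕ) (n : ℤ) : A :=
  if i = 0 then R (n - 1) - Vp R g m (n - 1) (n - 2) + (if n = 0 then 1 else 0)
  else
    Zwp R (n - 1) (n - 1) (2 * i) *
        (R (n - 1) - Vp R g m (n - 1) (n - 2) + (if n = 0 then 1 else 0)) -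
      ∑ j ∈ Finset.Icc 1 i,
        Zwp R (n - 1) (n - 1 + 2 * (j : ℤ)) (2 * i) * Vp R g m (n + 2 * (j : ℤ) - 1) (n - 2)

/-- The symmetric conserved quantities `Γ̃_{2i}(n)`; `Gamt R g m i n` stands
for `Γ̃_{2i}(n)`. -/
def Gamt (R : ℤ → A) (g : ℕ → A) (m : ℕ) (i : ℕ) (n : ℤ) : A :=
  if i = 0 then R n - Vp R g m n (n - 1)
  else
    (Zw R n (n - 1) (2 * i - 1) - R (n - 1) * R (n + 1) * Zw R (n - 2) (n + 1) (2 * i - 1)) *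
        (R n - Vp R g m n (n - 1)) -
      ∑ j ∈ Finset.Icc 1 i,
        (Zw R (n - (j : ℤ)) (n + (j : ℤ) - 1) (2 * i - 1) -
            R (n - (j : ℤ) - 1) * R (n + (j : ℤ) + 1) *
              Zw R (n - (j : ℤ) - 2) (n + (j : ℤ) + 1) (2 * i - 1)) *
          Vp R g m (n + (j : ℤ)) (n - (j : ℤ) - 1)

/-- The master equation: `R i = 0` for `i < 0` and `R n = 1 + V'_{n,n-1}` for `n ≥ 0`. -/
def MasterEq (R : ℤ → A) (g : ℕ → A) (m : ℕ) : Prop :=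
  (∀ i : ℤ, i < 0 → R i = 0) ∧ ∀ n : ℤ, 0 ≤ n → R n = 1 + Vp R g m n (n - 1)

/-- `Zodd R a b i = Zw R a b (2i-1)`, with the convention that for `i = 0`
(walks of length `-1`) it equals `1` if `b = a - 1` and `0` otherwise. -/
def Zodd (R : ℤ → A) (a b : ℤ) (i : ℕ) : A :=
  if i = 0 then (if b = a - 1 then 1 else 0) else Zw R a b (2 * i - 1)

/-- Binomial coefficient with an integer lower index, with the convention that it
vanishes for negative lower index. -/
def Cz (n : ℕ) (p : ℤ) : ℤ := if 0 ≤ p then n.choose p.toNat else 0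


/-! ### Auxiliary development for stmt_19 -/

section Stmt19Aux

variable (R : ℤ → A)

/-- Whether every height visited by the walk (incl. first and last) lies in `[L,U]`. -/
def inBand (L U : ℤ) : ℤ → List Bool → Bool
  | a, [] => decide (L ≤ a ∧ a ≤ U)
  | a, true :: s => decide (L ≤ a ∧ a ≤ U) && inBand L U (a + 1) s
  | a, false :: s => decide (L ≤ a ∧ a ≤ U) && inBand L U (a - 1) s

/-- Walks constrained to the band `[L,U]`. -/
def ZI (L U a b : ℤ) (k : ℕ) : A :=
  ∑ s : Fin k → Bool,
    if walkEnd a (List.ofFn s) = b ∧ inBand L U a (List.ofFn s) = true then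
      walkWeight R a (List.ofFn s)
    else 0

/-- Band-constrained analogue of `Zodd`. -/
def ZIO (L U a b : ℤ) (i : ℕ) : A :=
  if i = 0 then (if b = a - 1 ∧ L ≤ a ∧ a ≤ U then 1 else 0)
  else ZI R L U a b (2 * i - 1)

lemma walkEnd_append (l l' : List Bool) (a : ℤ) :
    walkEnd a (l ++ l') = walkEnd (walkEnd a l) l' := by
  induction l generalizing a with
  | nil => rfl
  | cons x s ih => cases x <;> simp [walkEnd, ih]

lemma walkWeight_append (l l' : List Bool) (a : ℤ) :
    walkWeight R a (l ++ l') = walkWeight R a l * walkWeight R (walkEnd a l) l' := by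
  induction l generalizing a with
  | nil => simp [walkWeight, walkEnd]
  | cons x s ih => cases x <;> simp [walkWeight, walkEnd, ih] <;> ring

lemma inBand_start {L U a : ℤ} {l : List Bool} (h : inBand L U a l = true) :
    L ≤ a ∧ a ≤ U := by
  cases l with
  | nil => simpa [inBand] using h
  | cons x s =>
    cases x <;> simp [inBand] at h <;> exact h.1

lemma inBand_end {L U a : ℤ} {l : List Bool} (h : inBand L U a l = true) :
    L ≤ walkEnd a l ∧ walkEnd a l ≤ U := by
  induction l generalizing a with
  | nil => simpa [walkEnd, inBand] using h
  | cons x s ih =>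
    cases x <;> simp [inBand, walkEnd] at h ⊢ <;> exact ih h.2

lemma inBand_append (L U : ℤ) (l l' : List Bool) (a : ℤ) :
    inBand L U a (l ++ l') = (inBand L U a l && inBand L U (walkEnd a l) l') := by
  induction l generalizing a with
  | nil =>
    show inBand L U a l' = (inBand L U a [] && inBand L U a l')
    cases h : inBand L U a l' with
    | false => simp
    | true =>
      have h2 := inBand_start h
      simp [inBand, h2.1, h2.2]
  | cons x s ih =>
    cases x <;> simp [inBand, walkEnd, ih, Bool.and_assoc]

lemma walkEnd_count (l : List Bool) (a : ℤ) :
    walkEnd a l = a + l.count true - l.count false := by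
  induction l generalizing a with
  | nil => simp [walkEnd]
  | cons x s ih =>
    cases x <;> simp [walkEnd, ih, List.count_cons] <;> push_cast <;> ring

lemma count_true_false (l : List Bool) : l.count true + l.count false = l.length := by
  induction l with
  | nil => rfl
  | cons x s ih => cases x <;> simp [List.count_cons] <;> omega

lemma inBand_of_bounds {L U a : ℤ} {l : List Bool}
    (h1 : L ≤ a - l.count false) (h2 : a + l.count true ≤ U) :
    inBand L U a l = true := by
  induction l generalizing a with
  | nil =>
    simp only [List.count_nil, Nat.cast_zero, sub_zero, add_zero] at h1 h2
    simp [inBand, h1, h2]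
  | cons x s ih =>
    cases x
    case false =>
      simp only [show (false :: s).count false = s.count false + 1 by simp,
          show (false :: s).count true = s.count true by simp] at h1 h2
      push_cast at h1 h2
      simp only [inBand, Bool.and_eq_true, decide_eq_true_iff]
      exact ⟨⟨by omega, by omega⟩, ih (by omega) (by omega)⟩
    case true =>
      simp only [show (true :: s).count true = s.count true + 1 by simp,
          show (true :: s).count false = s.count false by simp] at h1 h2
      push_cast at h1 h2
      simp only [inBand, Bool.and_eq_true, decide_eq_true_iff]
      exact ⟨⟨by omega, by omega⟩, ih (by omega) (by omega)⟩


lemma sum_ofFn_cons (F : List Bool → A) (k : ℕ) :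
    ∑ s : Fin (k + 1) → Bool, F (List.ofFn s)
      = (∑ s : Fin k → Bool, F (true :: List.ofFn s))
        + ∑ s : Fin k → Bool, F (false :: List.ofFn s) := by
  rw [Fintype.sum_equiv ((Fin.consEquiv (fun _ : Fin (k + 1) => Bool)).symm)
        (fun s : Fin (k + 1) → Bool => F (List.ofFn s))
        (fun x : Bool × (Fin k → Bool) => F (x.1 :: List.ofFn x.2))
        (fun s => by rw [List.ofFn_succ]; rfl)]
  rw [Fintype.sum_prod_type, Fintype.sum_bool]

lemma sum_ofFn_snoc (F : List Bool → A) (k : ℕ) :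
    ∑ s : Fin (k + 1) → Bool, F (List.ofFn s)
      = (∑ s : Fin k → Bool, F (List.ofFn s ++ [true]))
        + ∑ s : Fin k → Bool, F (List.ofFn s ++ [false]) := by
  rw [Fintype.sum_equiv ((Fin.snocEquiv (fun _ : Fin (k + 1) => Bool)).symm)
        (fun s : Fin (k + 1) → Bool => F (List.ofFn s))
        (fun x : Bool × (Fin k → Bool) => F (List.ofFn x.2 ++ [x.1]))
        (fun s => by rw [List.ofFn_succ', List.concat_eq_append]; rfl)]
  rw [Fintype.sum_prod_type, Fintype.sum_bool]

lemma ZI_len_zero (L U a b : ℤ) :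
    ZI R L U a b 0 = if b = a ∧ L ≤ a ∧ a ≤ U then 1 else 0 := by
  rw [ZI]
  rw [Fintype.sum_subsingleton _ (fun i : Fin 0 => true)]
  have : List.ofFn (fun _ : Fin 0 => true) = [] := by simp
  rw [this]
  simp only [walkEnd, walkWeight, inBand]
  by_cases h : b = a
  · subst h
    by_cases h2 : L ≤ b ∧ b ≤ U <;> simp [h2]
  · have h' : ¬ a = b := fun e => h e.symm
    simp [h, h']

lemma ZI_succ_left {L U : ℤ} {a : ℤ} (b : ℤ) (h1 : L ≤ a) (h2 : a ≤ U) (ℓ : ℕ) :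
    ZI R L U a b (ℓ + 1) = ZI R L U (a + 1) b ℓ + R a * ZI R L U (a - 1) b ℓ := by
  have hsplit := sum_ofFn_cons (A := A)
    (fun l => if walkEnd a l = b ∧ inBand L U a l = true then walkWeight R a l else 0) ℓ
  rw [ZI, hsplit]
  congr 1
  · rw [ZI]
    refine Finset.sum_congr rfl fun s _ => ?_
    simp [walkEnd, walkWeight, inBand, h1, h2]
  · rw [ZI, Finset.mul_sum]
    refine Finset.sum_congr rfl fun s _ => ?_
    simp [walkEnd, walkWeight, inBand, h1, h2, mul_ite]

lemma ZI_out_left {L U a : ℤ} (b : ℤ) (h : a < L ∨ U < a) (ℓ : ℕ) :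
    ZI R L U a b ℓ = 0 := by
  rw [ZI]
  refine Finset.sum_eq_zero fun s _ => ?_
  rw [if_neg]
  rintro ⟨-, hband⟩
  have := inBand_start hband
  omega

lemma ZI_out_right {L U b : ℤ} (a : ℤ) (h : b < L ∨ U < b) (ℓ : ℕ) :
    ZI R L U a b ℓ = 0 := by
  rw [ZI]
  refine Finset.sum_eq_zero fun s _ => ?_
  rw [if_neg]
  rintro ⟨he, hband⟩
  have := inBand_end hband
  omega

lemma ZI_succ_right {L U : ℤ} {b : ℤ} (a : ℤ) (h1 : L ≤ b) (h2 : b ≤ U) (ℓ : ℕ) :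
    ZI R L U a b (ℓ + 1) = ZI R L U a (b - 1) ℓ + R (b + 1) * ZI R L U a (b + 1) ℓ := by
  have hsplit := sum_ofFn_snoc (A := A)
    (fun l => if walkEnd a l = b ∧ inBand L U a l = true then walkWeight R a l else 0) ℓ
  rw [ZI, hsplit]
  congr 1
  · rw [ZI]
    refine Finset.sum_congr rfl fun s _ => ?_
    set l := List.ofFn s
    have hE : walkEnd a (l ++ [true]) = walkEnd a l + 1 := by
      rw [walkEnd_append]; rfl
    have hW : walkWeight R a (l ++ [true]) = walkWeight R a l := by
      rw [walkWeight_append]; simp [walkWeight]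
    by_cases he : walkEnd a l = b - 1
    · have hB : inBand L U a (l ++ [true]) = inBand L U a l := by
        rw [inBand_append]
        cases hl : inBand L U a l with
        | false => simp
        | true =>
          have := inBand_end hl
          simp [inBand, he, h1, h2]
          omega
      rw [hE, hW, hB, he]
      simp
    · rw [if_neg, if_neg]
      · rintro ⟨h', -⟩; exact he h'
      · rintro ⟨h', -⟩; rw [hE] at h'; omega
  · rw [ZI, Finset.mul_sum]
    refine Finset.sum_congr rfl fun s _ => ?_
    set l := List.ofFn s
    have hE : walkEnd a (l ++ [false]) = walkEnd a l - 1 := by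
      rw [walkEnd_append]; rfl
    by_cases he : walkEnd a l = b + 1
    · have hW : walkWeight R a (l ++ [false]) = R (b + 1) * walkWeight R a l := by
        rw [walkWeight_append, he]; simp [walkWeight]; ring
      have hB : inBand L U a (l ++ [false]) = inBand L U a l := by
        rw [inBand_append]
        cases hl : inBand L U a l with
        | false => simp
        | true =>
          have := inBand_end hl
          simp [inBand, he, h1, h2]
          omega
      rw [hE, hW, hB, he]
      simp
    · have hA : ¬(walkEnd a (l ++ [false]) = b ∧ inBand L U a (l ++ [false]) = true) := by
        rintro ⟨h', -⟩; rw [hE] at h'; omega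
      have hB : ¬(walkEnd a l = b + 1 ∧ inBand L U a l = true) := by
        rintro ⟨h', -⟩; exact he h'
      rw [if_neg hA, if_neg hB, mul_zero]

lemma Zw_eq_ZI {L U a b : ℤ} (ℓ : ℕ) (hL : 2 * L ≤ a + b - ℓ) (hU : a + b + (ℓ : ℤ) ≤ 2 * U) :
    Zw R a b ℓ = ZI R L U a b ℓ := by
  rw [Zw, ZI]
  refine Finset.sum_congr rfl fun s _ => ?_
  set l := List.ofFn s with hl
  have hlen : l.length = ℓ := by rw [hl, List.length_ofFn]
  by_cases he : walkEnd a l = b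
  · have hcnt := count_true_false l
    have hwc := walkEnd_count l a
    have hband : inBand L U a l = true := by
      apply inBand_of_bounds <;> omega
    simp [he, hband]
  · simp [he]

lemma Zw_eq_zero {a b : ℤ} (ℓ : ℕ) (h : (ℓ : ℤ) < b - a) : Zw R a b ℓ = 0 := by
  rw [Zw]
  refine Finset.sum_eq_zero fun s _ => ?_
  rw [if_neg]
  intro he
  have hcnt := count_true_false (List.ofFn s)
  have hwc := walkEnd_count (List.ofFn s) a
  have hlen : (List.ofFn s).length = ℓ := List.length_ofFn
  omega

lemma walkEnd_replicate (ℓ : ℕ) (a : ℤ) :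
    walkEnd a (List.replicate ℓ true) = a + ℓ := by
  induction ℓ generalizing a with
  | zero => simp [walkEnd]
  | succ m ih => simp [List.replicate, walkEnd, ih]; ring

lemma walkWeight_replicate (ℓ : ℕ) (a : ℤ) :
    walkWeight R a (List.replicate ℓ true) = 1 := by
  induction ℓ generalizing a with
  | zero => simp [walkWeight]
  | succ m ih => simp [List.replicate, walkWeight, ih]

lemma Zw_all_up (a : ℤ) (ℓ : ℕ) : Zw R a (a + ℓ) ℓ = 1 := by
  rw [Zw]
  rw [Fintype.sum_eq_single (fun _ : Fin ℓ => true)]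
  · rw [if_pos]
    · rw [List.ofFn_const, walkWeight_replicate]
    · rw [List.ofFn_const, walkEnd_replicate]
  · intro s hs
    rw [if_neg]
    intro he
    have hcnt := count_true_false (List.ofFn s)
    have hwc := walkEnd_count (List.ofFn s) a
    have hlen : (List.ofFn s).length = ℓ := List.length_ofFn
    have hf : false ∈ List.ofFn s := by
      rcases Function.ne_iff.mp hs with ⟨i, hi⟩
      have : s i = false := by simpa using hi
      rw [List.mem_ofFn]
      exact ⟨i, this⟩
    have : 0 < (List.ofFn s).count false := List.count_pos_iff.mpr hf
    omega


lemma Pdim_alt (a b : ℤ) (m : ℕ) :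
    Pdim R a b m = ∑ S ∈ (Finset.Icc (a + 1) b).powerset,
      (if S.card = m ∧ (∀ i ∈ S, i + 1 ∉ S) then ∏ i ∈ S, R i else 0) := by
  rw [Pdim, Finset.powersetCard_eq_filter, Finset.sum_filter]
  refine Finset.sum_congr rfl fun S _ => ?_
  by_cases h1 : S.card = m <;> by_cases h2 : ∀ i ∈ S, i + 1 ∉ S <;> simp [h1, h2]

lemma Pdim_zero (a b : ℤ) : Pdim R a b 0 = 1 := by
  simp [Pdim]

lemma Pdim_eq_zero {a b : ℤ} {m : ℕ} (h : b - a + 1 < 2 * m) (hm : 1 ≤ m) :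
    Pdim R a b m = 0 := by
  rw [Pdim]
  refine Finset.sum_eq_zero fun S hS => ?_
  rw [Finset.mem_powersetCard] at hS
  rw [if_neg]
  intro hno
  have hinj : Function.Injective (fun x : ℤ => x - 1) := fun x y hxy => by
    simpa using hxy
  have hdisj : Disjoint S (S.image (fun x => x - 1)) := by
    rw [Finset.disjoint_left]
    intro x hx hx'
    simp only [Finset.mem_image] at hx'
    obtain ⟨y, hy, hxy⟩ := hx'
    have hx1 : x + 1 ∈ S := by
      have : y = x + 1 := by omega
      rwa [this] at hy
    exact hno x hx hx1
  have hcard : (S ∪ S.image (fun x => x - 1)).card = 2 * m := by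
    rw [Finset.card_union_of_disjoint hdisj, Finset.card_image_of_injective _ hinj, hS.2]
    ring
  have hsub : S ∪ S.image (fun x => x - 1) ⊆ Finset.Icc a b := by
    intro x hx
    rw [Finset.mem_union] at hx
    rcases hx with hx | hx
    · have := hS.1 hx
      simp only [Finset.mem_Icc] at this ⊢
      omega
    · simp only [Finset.mem_image] at hx
      obtain ⟨y, hy, rfl⟩ := hx
      have := hS.1 hy
      simp only [Finset.mem_Icc] at this ⊢
      omega
  have hle := Finset.card_le_card hsub
  rw [hcard, Int.card_Icc] at hle
  omega

lemma Pdim_succ {a b : ℤ} (hab : a ≤ b) (m : ℕ) :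
    Pdim R a (b + 1) (m + 1) = Pdim R a b (m + 1) + R (b + 1) * Pdim R a (b - 1) m := by
  have hins : Finset.Icc (a + 1) (b + 1) = insert (b + 1) (Finset.Icc (a + 1) b) := by
    ext x
    simp only [Finset.mem_Icc, Finset.mem_insert]
    omega
  have hnot : (b + 1) ∉ Finset.Icc (a + 1) b := by simp
  rw [Pdim_alt, hins, Finset.sum_powerset_insert hnot]
  congr 1
  · rw [Pdim_alt]
  · have herase : (Finset.Icc (a + 1) b).erase b = Finset.Icc (a + 1) (b - 1) := by
      ext x
      simp only [Finset.mem_erase, Finset.mem_Icc]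
      omega
    have hpow : ((Finset.Icc (a + 1) b).erase b).powerset
        = (Finset.Icc (a + 1) b).powerset.filter (fun S => b ∉ S) := by
      ext S
      simp only [Finset.mem_powerset, Finset.mem_filter, Finset.subset_erase]
    rw [Pdim_alt, Finset.mul_sum, ← herase, hpow, Finset.sum_filter]
    refine Finset.sum_congr rfl fun S hS => ?_
    rw [Finset.mem_powerset] at hS
    have hb1S : (b + 1) ∉ S := fun h => by
      have := hS h
      simp only [Finset.mem_Icc] at this
      omega
    have hcard : (insert (b + 1) S).card = S.card + 1 := Finset.card_insert_of_notMem hb1S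
    have hprod : ∏ i ∈ insert (b + 1) S, R i = R (b + 1) * ∏ i ∈ S, R i :=
      Finset.prod_insert hb1S
    have hno : (∀ i ∈ insert (b + 1) S, i + 1 ∉ insert (b + 1) S)
        ↔ ((∀ i ∈ S, i + 1 ∉ S) ∧ b ∉ S) := by
      constructor
      · intro h
        refine ⟨fun i hi hcon => h i (Finset.mem_insert_of_mem hi)
            (Finset.mem_insert_of_mem hcon), fun hbS => ?_⟩
        exact h b (Finset.mem_insert_of_mem hbS) (Finset.mem_insert_self _ _)
      · rintro ⟨hn, hb⟩ i hi hcon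
        rcases Finset.mem_insert.mp hi with rfl | hiS
        · rcases Finset.mem_insert.mp hcon with h' | h'
          · omega
          · have := hS h'
            simp only [Finset.mem_Icc] at this
            omega
        · rcases Finset.mem_insert.mp hcon with h' | h'
          · have hib : i = b := by omega
            exact hb (hib ▸ hiS)
          · exact hn i hiS h'
    rw [hcard, hprod]
    by_cases hcS : S.card = m
    · by_cases hnS : ∀ i ∈ S, i + 1 ∉ S
      · by_cases hbS : b ∉ S
        · rw [if_pos ⟨by omega, hno.mpr ⟨hnS, hbS⟩⟩, if_pos hbS, if_pos ⟨hcS, hnS⟩]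
        · rw [if_neg, if_neg hbS]
          rintro ⟨-, hcon⟩
          exact hbS (hno.mp hcon).2
      · rw [if_neg]
        · by_cases hbS : b ∉ S
          · rw [if_pos hbS, if_neg (fun hc => hnS hc.2), mul_zero]
          · rw [if_neg hbS]
        · rintro ⟨-, hcon⟩
          exact hnS (hno.mp hcon).1
    · rw [if_neg (fun hc => hcS (by omega))]
      by_cases hbS : b ∉ S
      · rw [if_pos hbS, if_neg (fun hc => hcS hc.1), mul_zero]
      · rw [if_neg hbS]


lemma star (L U : ℤ) :
    ∀ t : ℕ, L + (t : ℤ) - 1 ≤ U → ∀ (ℓ : ℕ) (y : ℤ),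
      (∑ p ∈ Finset.range (t + 1),
        (-1 : A) ^ p * Pdim R L (L + (t : ℤ) - 1) p * ZI R L U L y (ℓ + t - 2 * p))
        = ZI R L U (L + (t : ℤ)) y ℓ := by
  intro t
  induction t using Nat.strong_induction_on with
  | _ t ih =>
    match t with
    | 0 => intro h ℓ y; simp [Pdim_zero]
    | 1 =>
      intro h ℓ y
      push_cast at h ⊢
      rw [Finset.sum_range_succ, Finset.sum_range_one]
      have hP1 : Pdim R L (L + 1 - 1) 1 = 0 := Pdim_eq_zero R (by omega) le_rfl
      have hz : ZI R L U (L - 1) y ℓ = 0 := ZI_out_left R y (Or.inl (by omega)) ℓ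
      have hstep := ZI_succ_left R (L := L) (U := U) (a := L) y le_rfl (by omega) ℓ
      rw [hz, mul_zero, add_zero] at hstep
      rw [hP1]
      simp only [pow_zero, pow_one, one_mul, mul_zero, zero_mul, add_zero,
        Nat.mul_zero, Nat.sub_zero, Pdim_zero, neg_mul, neg_zero]
      exact hstep
    | (t + 2) =>
      intro h ℓ y
      have hb : L + ((t + 2 : ℕ) : ℤ) - 1 = L + (t : ℤ) + 1 := by push_cast; ring
      have ha : L + ((t + 2 : ℕ) : ℤ) = L + (t : ℤ) + 1 + 1 := by push_cast; ring
      have hU2 : L + (t : ℤ) + 1 ≤ U := by push_cast at h; omega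
      rw [hb, ha]
      have ih1 := ih (t + 1) (by omega) (by push_cast; omega) (ℓ + 1) y
      have ih0 := ih t (by omega) (by push_cast; omega) ℓ y
      have e1 : L + ((t + 1 : ℕ) : ℤ) - 1 = L + (t : ℤ) := by push_cast; ring
      have e2 : L + ((t + 1 : ℕ) : ℤ) = L + (t : ℤ) + 1 := by push_cast; ring
      rw [e1, e2, Finset.sum_range_succ'] at ih1
      rw [Finset.sum_range_succ']
      have hsplit : ∀ q ∈ Finset.range (t + 2),
          (-1 : A) ^ (q + 1) * Pdim R L (L + (t : ℤ) + 1) (q + 1)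
              * ZI R L U L y (ℓ + (t + 2) - 2 * (q + 1))
            = (-1 : A) ^ (q + 1) * Pdim R L (L + (t : ℤ)) (q + 1)
                * ZI R L U L y (ℓ + 1 + (t + 1) - 2 * (q + 1))
              + (- R (L + (t : ℤ) + 1))
                * ((-1 : A) ^ q * Pdim R L (L + (t : ℤ) - 1) q
                    * ZI R L U L y (ℓ + t - 2 * q)) := by
        intro q hq
        rw [show ℓ + (t + 2) - 2 * (q + 1) = ℓ + t - 2 * q from by omega,
          show ℓ + 1 + (t + 1) - 2 * (q + 1) = ℓ + t - 2 * q from by omega]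
        rw [show L + (t : ℤ) + 1 = (L + (t : ℤ)) + 1 from by ring,
          Pdim_succ R (by omega : L ≤ L + (t : ℤ)) q]
        ring
      rw [Finset.sum_congr rfl hsplit, Finset.sum_add_distrib, ← Finset.mul_sum]
      have hPt2 : Pdim R L (L + (t : ℤ)) (t + 2) = 0 := Pdim_eq_zero R (by omega) (by omega)
      have hPt1 : Pdim R L (L + (t : ℤ) - 1) (t + 1) = 0 := Pdim_eq_zero R (by omega) (by omega)
      rw [Finset.sum_range_succ ((fun q => (-1 : A) ^ (q + 1) * Pdim R L (L + (t : ℤ)) (q + 1)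
                * ZI R L U L y (ℓ + 1 + (t + 1) - 2 * (q + 1)))) (t + 1)]
      rw [Finset.sum_range_succ ((fun q => (-1 : A) ^ q * Pdim R L (L + (t : ℤ) - 1) q
                    * ZI R L U L y (ℓ + t - 2 * q))) (t + 1)]
      rw [hPt1, hPt2]
      have hstep := ZI_succ_left R (L := L) (U := U) (a := L + (t : ℤ) + 1) y
        (by omega) hU2 ℓ
      rw [show L + (t:ℤ) + 1 - 1 = L + (t:ℤ) from by ring] at hstep
      have hz0 : ZI R L U L y (ℓ + (t + 2) - 2 * 0) = ZI R L U L y (ℓ + 1 + (t + 1) - 2 * 0) := by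
        congr 1
        omega
      rw [hz0]
      have hp0 : Pdim R L (L + (t : ℤ) + 1) 0 = Pdim R L (L + (t : ℤ)) 0 := by
        rw [Pdim_zero, Pdim_zero]
      rw [hp0]
      linear_combination ih1 + hstep - R (L + (t : ℤ) + 1) * ih0

lemma CH (L U : ℤ) (N : ℕ) (hU : U = L + (N : ℤ) - 1) (s : ℕ) (y : ℤ) :
    (∑ p ∈ Finset.range (N + 1),
      (-1 : A) ^ p * Pdim R L U p * ZI R L U L y (s + N - 2 * p)) = 0 := by
  have h := star R L U N (by omega) s y
  rw [← hU] at h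
  rw [h]
  exact ZI_out_left R y (Or.inr (by omega)) s

lemma rowCH (L U : ℤ) (N : ℕ) (hU : U = L + (N : ℤ) - 1) (t : ℕ) (ht : (t : ℤ) ≤ U - L)
    (s : ℕ) (y : ℤ) :
    (∑ p ∈ Finset.range (N + 1),
      (-1 : A) ^ p * Pdim R L U p * ZI R L U (L + (t : ℤ)) y (s + N - 2 * p)) = 0 := by
  have hstar := star R L U t (by omega)
  calc (∑ p ∈ Finset.range (N + 1),
          (-1 : A) ^ p * Pdim R L U p * ZI R L U (L + (t : ℤ)) y (s + N - 2 * p))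
      = ∑ p ∈ Finset.range (N + 1), ∑ q ∈ Finset.range (t + 1),
          (-1 : A) ^ p * Pdim R L U p *
            ((-1 : A) ^ q * Pdim R L (L + (t : ℤ) - 1) q
              * ZI R L U L y (s + N - 2 * p + t - 2 * q)) := by
        refine Finset.sum_congr rfl fun p _ => ?_
        rw [← hstar (s + N - 2 * p) y, Finset.mul_sum]
    _ = ∑ q ∈ Finset.range (t + 1), ∑ p ∈ Finset.range (N + 1),
          (-1 : A) ^ q * Pdim R L (L + (t : ℤ) - 1) q *
            ((-1 : A) ^ p * Pdim R L U p
              * ZI R L U L y (s + t - 2 * q + N - 2 * p)) := by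
        rw [Finset.sum_comm]
        refine Finset.sum_congr rfl fun q hq => Finset.sum_congr rfl fun p hp => ?_
        by_cases h2p : 2 * p ≤ N
        · by_cases h2q : 2 * q ≤ t
          · rw [show s + N - 2 * p + t - 2 * q = s + t - 2 * q + N - 2 * p from by omega]
            ring
          · rw [Pdim_eq_zero (R := R) (a := L) (b := L + (t : ℤ) - 1) (by omega) (by omega)]
            ring
        · rw [hU, Pdim_eq_zero (R := R) (a := L) (b := L + (N : ℤ) - 1) (by omega) (by omega)]
          ring
    _ = 0 := by
        refine Finset.sum_eq_zero fun q _ => ?_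
        rw [← Finset.mul_sum, CH R L U N hU (s + t - 2 * q) y, mul_zero]


lemma step_right {L U a b : ℤ} (h1 : L ≤ b + 1) (h2 : b + 1 ≤ U) (hab : a ≤ b + 2) (i : ℕ) :
    ZI R L U a (b + 1) (2 * i) = ZIO R L U a b i + R (b + 2) * ZIO R L U a (b + 2) i := by
  cases i with
  | zero =>
    rw [show (2 * 0 : ℕ) = 0 from rfl, ZI_len_zero, ZIO, ZIO]
    simp only [if_pos rfl, if_true]
    have hc3 : ¬(b + 2 = a - 1 ∧ L ≤ a ∧ a ≤ U) := by rintro ⟨h', -⟩; omega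
    rw [if_neg hc3, mul_zero, add_zero]
    have : (b + 1 = a ∧ L ≤ a ∧ a ≤ U) ↔ (b = a - 1 ∧ L ≤ a ∧ a ≤ U) := by
      constructor <;> rintro ⟨x, y⟩ <;> exact ⟨by omega, y⟩
    simp only [this]
  | succ i' =>
    rw [show 2 * (i' + 1) = (2 * i' + 1) + 1 from by omega,
      ZI_succ_right R (b := b + 1) a h1 h2 (2 * i' + 1)]
    rw [show b + 1 - 1 = b from by ring, show b + 1 + 1 = b + 2 from by ring, ZIO, ZIO]
    simp only [Nat.succ_ne_zero, if_false]
    rw [show 2 * (i' + 1) - 1 = 2 * i' + 1 from by omega]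

lemma step_left {L U a b : ℤ} (h1 : L ≤ a - 1) (h2 : a - 1 ≤ U) (hab : a ≤ b + 2) (i : ℕ) :
    ZI R L U (a - 1) (b + 2) (2 * i)
      = ZIO R L U a (b + 2) i + R (a - 1) * ZIO R L U (a - 2) (b + 2) i := by
  cases i with
  | zero =>
    rw [show (2 * 0 : ℕ) = 0 from rfl, ZI_len_zero, ZIO, ZIO]
    simp only [if_pos rfl, if_true]
    have hc1 : ¬(b + 2 = a - 1 ∧ L ≤ a - 1 ∧ a - 1 ≤ U) := by rintro ⟨h', -⟩; omega
    have hc2 : ¬(b + 2 = a - 1 ∧ L ≤ a ∧ a ≤ U) := by rintro ⟨h', -⟩; omega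
    have hc3 : ¬(b + 2 = a - 2 - 1 ∧ L ≤ a - 2 ∧ a - 2 ≤ U) := by rintro ⟨h', -⟩; omega
    rw [if_neg hc1, if_neg hc2, if_neg hc3, mul_zero, add_zero]
  | succ i' =>
    rw [show 2 * (i' + 1) = (2 * i' + 1) + 1 from by omega,
      ZI_succ_left R (b + 2) h1 h2 (2 * i' + 1)]
    rw [show a - 1 + 1 = a from by ring, show a - 1 - 1 = a - 2 from by ring, ZIO, ZIO]
    simp only [Nat.succ_ne_zero, if_false]
    rw [show 2 * (i' + 1) - 1 = 2 * i' + 1 from by omega]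

lemma ZIO_eq_Zodd {L U a b : ℤ} (h0 : b = a - 1 → L ≤ a ∧ a ≤ U) (M i : ℕ) (hi : i ≤ M)
    (hL : 2 * L ≤ a + b - (2 * (M : ℤ) - 1)) (hU : a + b + (2 * (M : ℤ) - 1) ≤ 2 * U) :
    ZIO R L U a b i = Zodd R a b i := by
  cases i with
  | zero =>
    rw [ZIO, Zodd]
    simp only [if_pos rfl, if_true]
    by_cases hb : b = a - 1
    · have := h0 hb
      simp [hb, this.1, this.2]
    · simp [hb]
  | succ i' =>
    rw [ZIO, Zodd]
    simp only [Nat.succ_ne_zero, if_false]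
    refine (Zw_eq_ZI R (2 * (i' + 1) - 1) ?_ ?_).symm
    · have : ((2 * (i' + 1) - 1 : ℕ) : ℤ) = 2 * (i' : ℤ) + 1 := by omega
      rw [this]
      have : (i' : ℤ) + 1 ≤ (M : ℤ) := by exact_mod_cast hi
      omega
    · have : ((2 * (i' + 1) - 1 : ℕ) : ℤ) = 2 * (i' : ℤ) + 1 := by omega
      rw [this]
      have : (i' : ℤ) + 1 ≤ (M : ℤ) := by exact_mod_cast hi
      omega

end Stmt19Aux

/-- the inversion relation of Appendix B, Eq. (B.2). The convention
`Z_{a,b}(-1) = 1` if `b = a-1` and `0` otherwise is implemented by `Zodd`. -/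
theorem stmt_19 {A : Type*} [CommRing A] (R : ℤ → A) (n : ℤ) (j k : ℕ) (hj : 1 ≤ j) :
    ∑ i ∈ Finset.range (j + 1),
        (-1 : A) ^ (j - i) * Pdim R (n - (j : ℤ)) (n + (j : ℤ) - 1) (j - i) *
          (Zodd R (n - (k : ℤ)) (n + (k : ℤ) - 1) i -
            R (n - (k : ℤ) - 1) * R (n + (k : ℤ) + 1) *
              Zodd R (n - (k : ℤ) - 2) (n + (k : ℤ) + 1) i) =
      if j = k then 1 else 0 := by
  rcases Nat.lt_trichotomy j k with hlt | heq | hgt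
  · -- j < k : every term vanishes
    rw [if_neg (by omega)]
    refine Finset.sum_eq_zero fun i hi => ?_
    rw [Finset.mem_range] at hi
    have hZ1 : Zodd R (n - (k : ℤ)) (n + (k : ℤ) - 1) i = 0 := by
      cases i with
      | zero =>
        rw [Zodd]; simp only [if_pos rfl, if_true]; rw [if_neg (by omega)]
      | succ i' =>
        rw [Zodd, if_neg (Nat.succ_ne_zero i')]
        exact Zw_eq_zero R _ (by omega)
    have hZ2 : Zodd R (n - (k : ℤ) - 2) (n + (k : ℤ) + 1) i = 0 := by
      cases i with
      | zero =>
        rw [Zodd]; simp only [if_pos rfl, if_true]; rw [if_neg (by omega)]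
      | succ i' =>
        rw [Zodd, if_neg (Nat.succ_ne_zero i')]
        exact Zw_eq_zero R _ (by omega)
    rw [hZ1, hZ2]
    ring
  · -- j = k : single surviving term
    subst heq
    rw [if_pos rfl]
    refine (Finset.sum_eq_single_of_mem j (Finset.self_mem_range_succ j) ?_).trans ?_
    · intro i hi hne
      rw [Finset.mem_range] at hi
      have hZ1 : Zodd R (n - (j : ℤ)) (n + (j : ℤ) - 1) i = 0 := by
        cases i with
        | zero =>
          rw [Zodd]; simp only [if_pos rfl, if_true]; rw [if_neg (by omega)]
        | succ i' =>
          rw [Zodd, if_neg (Nat.succ_ne_zero i')]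
          exact Zw_eq_zero R _ (by omega)
      have hZ2 : Zodd R (n - (j : ℤ) - 2) (n + (j : ℤ) + 1) i = 0 := by
        cases i with
        | zero =>
          rw [Zodd]; simp only [if_pos rfl, if_true]; rw [if_neg (by omega)]
        | succ i' =>
          rw [Zodd, if_neg (Nat.succ_ne_zero i')]
          exact Zw_eq_zero R _ (by omega)
      rw [hZ1, hZ2]
      ring
    · have h1 : Zodd R (n - (j : ℤ)) (n + (j : ℤ) - 1) j = 1 := by
        rw [Zodd, if_neg (by omega)]
        rw [show n + (j : ℤ) - 1 = (n - (j : ℤ)) + ((2 * j - 1 : ℕ) : ℤ) from by omega]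
        exact Zw_all_up R _ _
      have h2 : Zodd R (n - (j : ℤ) - 2) (n + (j : ℤ) + 1) j = 0 := by
        rw [Zodd, if_neg (by omega)]
        exact Zw_eq_zero R _ (by omega)
      rw [h1, h2, Nat.sub_self, Pdim_zero]
      ring
  · -- k < j : the inversion identity
    rw [if_neg (by omega)]
    have hUeq : n + (j : ℤ) - 1 = (n - (j : ℤ)) + ((2 * j : ℕ) : ℤ) - 1 := by push_cast; ring
    have hvan : ∀ p, j < p → Pdim R (n - (j : ℤ)) (n + (j : ℤ) - 1) p = 0 := by
      intro p hp
      exact Pdim_eq_zero R (by omega) (by omega)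
    -- first row identity (row n - k, column n + k)
    have h1 := rowCH R (n - (j : ℤ)) (n + (j : ℤ) - 1) (2 * j) hUeq (j - k) (by omega)
      0 (n + (k : ℤ))
    rw [show (n - (j : ℤ)) + ((j - k : ℕ) : ℤ) = n - (k : ℤ) from by omega] at h1
    have h1' : (∑ p ∈ Finset.range (j + 1),
        (-1 : A) ^ p * Pdim R (n - (j : ℤ)) (n + (j : ℤ) - 1) p *
          ZI R (n - (j : ℤ)) (n + (j : ℤ) - 1) (n - (k : ℤ)) (n + (k : ℤ)) (0 + 2 * j - 2 * p))
        = 0 := by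
      rw [Finset.sum_subset (Finset.range_subset_range.mpr (show j + 1 ≤ 2 * j + 1 by omega))
        (fun p hp hnp => by
          rw [hvan p (by simpa using hnp)]
          ring)]
      exact h1
    have hrefl1 := Finset.sum_range_reflect
      (fun p => (-1 : A) ^ p * Pdim R (n - (j : ℤ)) (n + (j : ℤ) - 1) p *
        ZI R (n - (j : ℤ)) (n + (j : ℤ) - 1) (n - (k : ℤ)) (n + (k : ℤ)) (0 + 2 * j - 2 * p))
      (j + 1)
    simp only [Nat.add_sub_cancel] at hrefl1
    have E1pre := hrefl1.trans h1'
    -- second row identity (row n - k - 1, column n + k + 1)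
    have h2 := rowCH R (n - (j : ℤ)) (n + (j : ℤ) - 1) (2 * j) hUeq (j - k - 1) (by omega)
      0 (n + (k : ℤ) + 1)
    rw [show (n - (j : ℤ)) + ((j - k - 1 : ℕ) : ℤ) = n - (k : ℤ) - 1 from by omega] at h2
    have h2' : (∑ p ∈ Finset.range (j + 1),
        (-1 : A) ^ p * Pdim R (n - (j : ℤ)) (n + (j : ℤ) - 1) p *
          ZI R (n - (j : ℤ)) (n + (j : ℤ) - 1) (n - (k : ℤ) - 1) (n + (k : ℤ) + 1)
            (0 + 2 * j - 2 * p)) = 0 := by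
      rw [Finset.sum_subset (Finset.range_subset_range.mpr (show j + 1 ≤ 2 * j + 1 by omega))
        (fun p hp hnp => by
          rw [hvan p (by simpa using hnp)]
          ring)]
      exact h2
    have hrefl2 := Finset.sum_range_reflect
      (fun p => (-1 : A) ^ p * Pdim R (n - (j : ℤ)) (n + (j : ℤ) - 1) p *
        ZI R (n - (j : ℤ)) (n + (j : ℤ) - 1) (n - (k : ℤ) - 1) (n + (k : ℤ) + 1)
          (0 + 2 * j - 2 * p))
      (j + 1)
    simp only [Nat.add_sub_cancel] at hrefl2
    have E2pre := hrefl2.trans h2'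
    -- split the two row identities along the last step of the walks
    have E1 : (∑ i ∈ Finset.range (j + 1),
          (-1 : A) ^ (j - i) * Pdim R (n - (j : ℤ)) (n + (j : ℤ) - 1) (j - i) *
            ZIO R (n - (j : ℤ)) (n + (j : ℤ) - 1) (n - (k : ℤ)) (n + (k : ℤ) - 1) i)
        + R (n + (k : ℤ) + 1) * (∑ i ∈ Finset.range (j + 1),
          (-1 : A) ^ (j - i) * Pdim R (n - (j : ℤ)) (n + (j : ℤ) - 1) (j - i) *
            ZIO R (n - (j : ℤ)) (n + (j : ℤ) - 1) (n - (k : ℤ)) (n + (k : ℤ) + 1) i) = 0 := by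
      rw [Finset.mul_sum, ← Finset.sum_add_distrib]
      refine Eq.trans ?_ E1pre
      refine Finset.sum_congr rfl fun i hi => ?_
      rw [Finset.mem_range] at hi
      have hstep := step_right R (L := n - (j : ℤ)) (U := n + (j : ℤ) - 1)
        (a := n - (k : ℤ)) (b := n + (k : ℤ) - 1) (by omega) (by omega) (by omega) i
      rw [show n + (k : ℤ) - 1 + 1 = n + (k : ℤ) from by ring,
          show n + (k : ℤ) - 1 + 2 = n + (k : ℤ) + 1 from by ring] at hstep
      rw [show 0 + 2 * j - 2 * (j - i) = 2 * i from by omega, hstep]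
      ring
    have E2 : (∑ i ∈ Finset.range (j + 1),
          (-1 : A) ^ (j - i) * Pdim R (n - (j : ℤ)) (n + (j : ℤ) - 1) (j - i) *
            ZIO R (n - (j : ℤ)) (n + (j : ℤ) - 1) (n - (k : ℤ)) (n + (k : ℤ) + 1) i)
        + R (n - (k : ℤ) - 1) * (∑ i ∈ Finset.range (j + 1),
          (-1 : A) ^ (j - i) * Pdim R (n - (j : ℤ)) (n + (j : ℤ) - 1) (j - i) *
            ZIO R (n - (j : ℤ)) (n + (j : ℤ) - 1) (n - (k : ℤ) - 2) (n + (k : ℤ) + 1) i) = 0 := by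
      rw [Finset.mul_sum, ← Finset.sum_add_distrib]
      refine Eq.trans ?_ E2pre
      refine Finset.sum_congr rfl fun i hi => ?_
      rw [Finset.mem_range] at hi
      have hstep := step_left R (L := n - (j : ℤ)) (U := n + (j : ℤ) - 1)
        (a := n - (k : ℤ)) (b := n + (k : ℤ) - 1) (by omega) (by omega) (by omega) i
      rw [show n + (k : ℤ) - 1 + 2 = n + (k : ℤ) + 1 from by ring] at hstep
      rw [show 0 + 2 * j - 2 * (j - i) = 2 * i from by omega, hstep]
      ring
    -- convert the goal to the band-restricted quantities
    have hconv : (∑ i ∈ Finset.range (j + 1),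
        (-1 : A) ^ (j - i) * Pdim R (n - (j : ℤ)) (n + (j : ℤ) - 1) (j - i) *
          (Zodd R (n - (k : ℤ)) (n + (k : ℤ) - 1) i -
            R (n - (k : ℤ) - 1) * R (n + (k : ℤ) + 1) *
              Zodd R (n - (k : ℤ) - 2) (n + (k : ℤ) + 1) i))
        = (∑ i ∈ Finset.range (j + 1),
          ((-1 : A) ^ (j - i) * Pdim R (n - (j : ℤ)) (n + (j : ℤ) - 1) (j - i) *
            ZIO R (n - (j : ℤ)) (n + (j : ℤ) - 1) (n - (k : ℤ)) (n + (k : ℤ) - 1) i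
          - R (n - (k : ℤ) - 1) * R (n + (k : ℤ) + 1) *
            ((-1 : A) ^ (j - i) * Pdim R (n - (j : ℤ)) (n + (j : ℤ) - 1) (j - i) *
              ZIO R (n - (j : ℤ)) (n + (j : ℤ) - 1) (n - (k : ℤ) - 2) (n + (k : ℤ) + 1) i))) := by
      refine Finset.sum_congr rfl fun i hi => ?_
      rw [Finset.mem_range] at hi
      rw [← ZIO_eq_Zodd R (L := n - (j : ℤ)) (U := n + (j : ℤ) - 1)
          (a := n - (k : ℤ)) (b := n + (k : ℤ) - 1)
          (fun _ => ⟨by omega, by omega⟩) j i (by omega) (by omega) (by omega),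
        ← ZIO_eq_Zodd R (L := n - (j : ℤ)) (U := n + (j : ℤ) - 1)
          (a := n - (k : ℤ) - 2) (b := n + (k : ℤ) + 1)
          (fun hb => absurd hb (by omega)) j i (by omega) (by omega) (by omega)]
      ring
    rw [hconv, Finset.sum_sub_distrib, ← Finset.mul_sum]
    linear_combination E1 - R (n + (k : ℤ) + 1) * E2
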